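/- Let H be a complex Hilbert space, let T1, T2 be commuting bounded operators on H with ‖T1‖ < 1 and ‖T2‖ < 1, let D_{T1} = (I − T1*T1)^{1/2}, D_{T2} = (I − T2*T2)^{1/2}, and suppose S is a unitary operator on H ⊕₂ H satisfying S(D_{T1} T2 h, D_{T2} h) = (D_{T1} h, D_{T2} T1 h) for all h ∈ H. On K = H ⊕₂ ℓ²(ℕ, H ⊕₂ H) define V1(h, (h1,h2), (h3,h4), …) = (T1 h, S(D_{T1} h, h2), S(h1, h4), S(h3, h6), …) and V2(h, (h1,h2), (h3,h4), …) = (T2 h, (h1', D_{T2} h), (h3', h2'), (h5', h4'), …), where (h_{2n−1}', h_{2n}') = S^{−1}(h_{2n−1}, h_{2n}) for n ≥ 1. Then V1 and V2 are commuting isometries on K, and for all nonnegative integers n1, n2 and all h ∈ H, the orthogonal projection of V1^{n1} V2^{n2}(h, 0) onto H equals T1^{n1} T2^{n2} h. -/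

import Mathlib

section AuxAndo

variable {H : Type*} [NormedAddCommGroup H] [InnerProductSpace ℂ H]

private lemma ando_lp2_normsq (f : lp (fun _ : ℕ => WithLp 2 (H × H)) 2) :
    ‖f‖ ^ 2 = ∑' n, ‖f n‖ ^ 2 := by
  have := lp.norm_rpow_eq_tsum (p := 2) (E := fun _ : ℕ => WithLp 2 (H × H)) (by norm_num) f
  simpa [ENNReal.toReal_ofNat, Real.rpow_natCast] using this

private lemma ando_lp2_summable (f : lp (fun _ : ℕ => WithLp 2 (H × H)) 2) :
    Summable (fun n => ‖f n‖ ^ 2) := by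
  have := (lp.memℓp f).summable (p := 2) (by norm_num)
  simpa [Real.rpow_natCast] using this

private lemma ando_K_ext (x y : WithLp 2 (H × lp (fun _ : ℕ => WithLp 2 (H × H)) 2))
    (h1 : x.fst = y.fst) (h2 : ∀ n, x.snd n = y.snd n) : x = y :=
  WithLp.ofLp_injective (p := 2) (Prod.ext h1 (lp.ext (funext h2)))

private lemma ando_normK (x : WithLp 2 (H × lp (fun _ : ℕ => WithLp 2 (H × H)) 2)) :
    ‖x‖ ^ 2 = ‖x.fst‖ ^ 2 + ∑' n, ‖x.snd n‖ ^ 2 := by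
  rw [WithLp.prod_norm_sq_eq_of_L2, ando_lp2_normsq]

open ContinuousLinearMap in
private lemma ando_defect_normsq [CompleteSpace H]
    (T D : H →L[ℂ] H) (hDsa : IsSelfAdjoint D)
    (hD : D ∘L D = 1 - (adjoint T) ∘L T) (h : H) :
    ‖T h‖ ^ 2 + ‖D h‖ ^ 2 = ‖h‖ ^ 2 := by
  have h1 : (inner ℂ (D h) (D h) : ℂ) = (inner ℂ h ((D ∘L D) h) : ℂ) := by
    have h0 := D.adjoint_inner_right h (D h)
    rw [hDsa.adjoint_eq] at h0
    rw [comp_apply]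
    exact h0.symm
  rw [hD] at h1
  simp only [sub_apply, ContinuousLinearMap.one_apply, comp_apply, inner_sub_right,
    ContinuousLinearMap.adjoint_inner_right] at h1
  have h2 := congrArg (RCLike.re (K := ℂ)) h1
  rw [map_sub, inner_self_eq_norm_sq, inner_self_eq_norm_sq, inner_self_eq_norm_sq] at h2
  linarith

end AuxAndo

/-- Given a commuting pair of strict contractions `(T1, T2)` on a complex Hilbert
space with defect operators `D1, D2`, and a unitary `S` on `H ⊕₂ H` satisfying
`S (D1 T2 h, D2 h) = (D1 h, D2 T1 h)`, the Andô-type operators `V1, V2` defined on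
`K = H ⊕₂ ℓ²(ℕ, H ⊕₂ H)` by
`V1 (h, (h1,h2), (h3,h4), …) = (T1 h, S (D1 h, h2), S (h1, h4), S (h3, h6), …)` and
`V2 (h, (h1,h2), (h3,h4), …) = (T2 h, (h1', D2 h), (h3', h2'), (h5', h4'), …)`,
where `(h_{2n-1}', h_{2n}') = S⁻¹ (h_{2n-1}, h_{2n})`, are commuting isometries, and
the projection of `V1^{n1} V2^{n2} (h, 0)` onto `H` is `T1^{n1} T2^{n2} h`. -/
theorem ando_operators_are_commuting_isometric_dilation
    (H : Type*) [NormedAddCommGroup H] [InnerProductSpace ℂ H] [CompleteSpace H]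
    (T1 T2 : H →L[ℂ] H) (hcomm : T1 ∘L T2 = T2 ∘L T1)
    (hT1 : ‖T1‖ < 1) (hT2 : ‖T2‖ < 1)
    (D1 D2 : H →L[ℂ] H)
    (hD1pos : D1.IsPositive) (hD2pos : D2.IsPositive)
    (hD1 : D1 ∘L D1 = 1 - (ContinuousLinearMap.adjoint T1) ∘L T1)
    (hD2 : D2 ∘L D2 = 1 - (ContinuousLinearMap.adjoint T2) ∘L T2)
    (S : WithLp 2 (H × H) ≃ₗᵢ[ℂ] WithLp 2 (H × H))
    (hS : ∀ h : H,
      S (WithLp.toLp 2 (D1 (T2 h), D2 h) : WithLp 2 (H × H)) = (WithLp.toLp 2 (D1 h, D2 (T1 h)) : WithLp 2 (H × H)))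
    (V1 V2 : WithLp 2 (H × lp (fun _ : ℕ => WithLp 2 (H × H)) 2) →L[ℂ]
        WithLp 2 (H × lp (fun _ : ℕ => WithLp 2 (H × H)) 2))
    (hV1fst : ∀ x, (V1 x).fst = T1 x.fst)
    (hV1zero : ∀ x, (V1 x).snd 0 = S (WithLp.toLp 2 (D1 x.fst, (x.snd 0).snd) : WithLp 2 (H × H)))
    (hV1succ : ∀ x, ∀ n : ℕ,
      (V1 x).snd (n + 1) = S (WithLp.toLp 2 ((x.snd n).fst, (x.snd (n + 1)).snd) : WithLp 2 (H × H)))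
    (hV2fst : ∀ x, (V2 x).fst = T2 x.fst)
    (hV2zero : ∀ x,
      (V2 x).snd 0 = (WithLp.toLp 2 ((S.symm (x.snd 0)).fst, D2 x.fst) : WithLp 2 (H × H)))
    (hV2succ : ∀ x, ∀ n : ℕ,
      (V2 x).snd (n + 1)
        = (WithLp.toLp 2 ((S.symm (x.snd (n + 1))).fst, (S.symm (x.snd n)).snd) : WithLp 2 (H × H))) :
    (∀ x, ‖V1 x‖ = ‖x‖) ∧ (∀ x, ‖V2 x‖ = ‖x‖) ∧
    V1 ∘L V2 = V2 ∘L V1 ∧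
    (∀ (n1 n2 : ℕ) (h : H),
      (((V1 ^ n1) * (V2 ^ n2))
          (WithLp.toLp 2 (h, 0) : WithLp 2 (H × lp (fun _ : ℕ => WithLp 2 (H × H)) 2))).fst
        = ((T1 ^ n1) * (T2 ^ n2)) h) := by
  have hcomm' : ∀ h : H, T1 (T2 h) = T2 (T1 h) := fun h => by
    have := ContinuousLinearMap.ext_iff.mp hcomm h
    simpa using this
  -- isometry of V1
  have hiso1 : ∀ x, ‖V1 x‖ = ‖x‖ := by
    intro x
    have hsq : ‖V1 x‖ ^ 2 = ‖x‖ ^ 2 := by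
      have hf : Summable (fun n => ‖x.snd n‖ ^ 2) := ando_lp2_summable x.snd
      have hg1 : Summable (fun n => ‖(x.snd n).fst‖ ^ 2) := by
        refine hf.of_nonneg_of_le (fun n => sq_nonneg _) (fun n => ?_)
        nlinarith [WithLp.prod_norm_sq_eq_of_L2 (x.snd n), sq_nonneg ‖(x.snd n).snd‖]
      have hg2 : Summable (fun n => ‖(x.snd n).snd‖ ^ 2) := by
        refine hf.of_nonneg_of_le (fun n => sq_nonneg _) (fun n => ?_)
        nlinarith [WithLp.prod_norm_sq_eq_of_L2 (x.snd n), sq_nonneg ‖(x.snd n).fst‖]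
      have hVf : Summable (fun n => ‖(V1 x).snd n‖ ^ 2) := ando_lp2_summable (V1 x).snd
      have hsplit : ∑' n, ‖x.snd n‖ ^ 2
          = (∑' n, ‖(x.snd n).fst‖ ^ 2) + ∑' n, ‖(x.snd n).snd‖ ^ 2 := by
        rw [← Summable.tsum_add hg1 hg2]
        exact tsum_congr fun n => WithLp.prod_norm_sq_eq_of_L2 (x.snd n)
      have hzero : ∑' n, ‖(x.snd n).snd‖ ^ 2
          = ‖(x.snd 0).snd‖ ^ 2 + ∑' n, ‖(x.snd (n + 1)).snd‖ ^ 2 := Summable.tsum_eq_zero_add hg2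
      have hVsplit : ∑' n, ‖(V1 x).snd n‖ ^ 2
          = ‖(V1 x).snd 0‖ ^ 2 + ∑' n, ‖(V1 x).snd (n + 1)‖ ^ 2 := Summable.tsum_eq_zero_add hVf
      have hterm0 : ‖(V1 x).snd 0‖ ^ 2 = ‖D1 x.fst‖ ^ 2 + ‖(x.snd 0).snd‖ ^ 2 := by
        rw [hV1zero, S.norm_map, WithLp.prod_norm_sq_eq_of_L2]; rfl
      have htermsucc : ∀ n : ℕ,
          ‖(V1 x).snd (n + 1)‖ ^ 2 = ‖(x.snd n).fst‖ ^ 2 + ‖(x.snd (n + 1)).snd‖ ^ 2 := fun n => by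
        rw [hV1succ, S.norm_map, WithLp.prod_norm_sq_eq_of_L2]; rfl
      have hg2' : Summable (fun n => ‖(x.snd (n + 1)).snd‖ ^ 2) := by
        simpa [Function.comp_def] using hg2.comp_injective Nat.succ_injective
      have hsum_succ : ∑' n, ‖(V1 x).snd (n + 1)‖ ^ 2
          = (∑' n, ‖(x.snd n).fst‖ ^ 2) + ∑' n, ‖(x.snd (n + 1)).snd‖ ^ 2 := by
        rw [← Summable.tsum_add hg1 hg2']
        exact tsum_congr htermsucc
      have hdef := ando_defect_normsq T1 D1 hD1pos.isSelfAdjoint hD1 x.fst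
      rw [ando_normK (V1 x), ando_normK x, hV1fst, hVsplit, hterm0, hsum_succ, hsplit, hzero]
      linarith
    rw [← Real.sqrt_sq (norm_nonneg (V1 x)), hsq, Real.sqrt_sq (norm_nonneg x)]
  -- isometry of V2
  have hiso2 : ∀ x, ‖V2 x‖ = ‖x‖ := by
    intro x
    have hsq : ‖V2 x‖ ^ 2 = ‖x‖ ^ 2 := by
      have hf : Summable (fun n => ‖x.snd n‖ ^ 2) := ando_lp2_summable x.snd
      have hkey : ∀ n : ℕ,
          ‖(S.symm (x.snd n)).fst‖ ^ 2 + ‖(S.symm (x.snd n)).snd‖ ^ 2 = ‖x.snd n‖ ^ 2 := fun n => by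
        rw [← WithLp.prod_norm_sq_eq_of_L2, S.symm.norm_map]
      have hu1 : Summable (fun n => ‖(S.symm (x.snd n)).fst‖ ^ 2) := by
        refine hf.of_nonneg_of_le (fun n => sq_nonneg _) (fun n => ?_)
        nlinarith [hkey n, sq_nonneg ‖(S.symm (x.snd n)).snd‖]
      have hu2 : Summable (fun n => ‖(S.symm (x.snd n)).snd‖ ^ 2) := by
        refine hf.of_nonneg_of_le (fun n => sq_nonneg _) (fun n => ?_)
        nlinarith [hkey n, sq_nonneg ‖(S.symm (x.snd n)).fst‖]
      have hVf : Summable (fun n => ‖(V2 x).snd n‖ ^ 2) := ando_lp2_summable (V2 x).snd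
      have hsplit : ∑' n, ‖x.snd n‖ ^ 2
          = (∑' n, ‖(S.symm (x.snd n)).fst‖ ^ 2) + ∑' n, ‖(S.symm (x.snd n)).snd‖ ^ 2 := by
        rw [← Summable.tsum_add hu1 hu2]
        exact tsum_congr fun n => (hkey n).symm
      have hzero : ∑' n, ‖(S.symm (x.snd n)).fst‖ ^ 2
          = ‖(S.symm (x.snd 0)).fst‖ ^ 2 + ∑' n, ‖(S.symm (x.snd (n + 1))).fst‖ ^ 2 :=
        Summable.tsum_eq_zero_add hu1
      have hVsplit : ∑' n, ‖(V2 x).snd n‖ ^ 2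
          = ‖(V2 x).snd 0‖ ^ 2 + ∑' n, ‖(V2 x).snd (n + 1)‖ ^ 2 := Summable.tsum_eq_zero_add hVf
      have hterm0 : ‖(V2 x).snd 0‖ ^ 2 = ‖(S.symm (x.snd 0)).fst‖ ^ 2 + ‖D2 x.fst‖ ^ 2 := by
        rw [hV2zero, WithLp.prod_norm_sq_eq_of_L2]; rfl
      have htermsucc : ∀ n : ℕ, ‖(V2 x).snd (n + 1)‖ ^ 2
          = ‖(S.symm (x.snd (n + 1))).fst‖ ^ 2 + ‖(S.symm (x.snd n)).snd‖ ^ 2 := fun n => by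
        rw [hV2succ, WithLp.prod_norm_sq_eq_of_L2]; rfl
      have hu1' : Summable (fun n => ‖(S.symm (x.snd (n + 1))).fst‖ ^ 2) := by
        simpa [Function.comp_def] using hu1.comp_injective Nat.succ_injective
      have hsum_succ : ∑' n, ‖(V2 x).snd (n + 1)‖ ^ 2
          = (∑' n, ‖(S.symm (x.snd (n + 1))).fst‖ ^ 2) + ∑' n, ‖(S.symm (x.snd n)).snd‖ ^ 2 := by
        rw [← Summable.tsum_add hu1' hu2]
        exact tsum_congr htermsucc
      have hdef := ando_defect_normsq T2 D2 hD2pos.isSelfAdjoint hD2 x.fst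
      rw [ando_normK (V2 x), ando_normK x, hV2fst, hVsplit, hterm0, hsum_succ, hsplit, hzero]
      linarith
    rw [← Real.sqrt_sq (norm_nonneg (V2 x)), hsq, Real.sqrt_sq (norm_nonneg x)]
  refine ⟨hiso1, hiso2, ?_, ?_⟩
  · -- commutation
    refine ContinuousLinearMap.ext fun x => ?_
    simp only [ContinuousLinearMap.comp_apply]
    refine ando_K_ext _ _ ?_ ?_
    · rw [hV1fst, hV2fst, hV2fst, hV1fst]
      exact hcomm' x.fst
    · intro n
      rcases n with _ | _ | n
      · rw [hV1zero (V2 x), hV2fst x, hV2zero x, hV2zero (V1 x), hV1zero x, hV1fst x,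
          LinearIsometryEquiv.symm_apply_apply]
        exact hS x.fst
      · rw [hV1succ (V2 x) 0, hV2zero x, hV2succ x 0, hV2succ (V1 x) 0, hV1succ x 0,
          hV1zero x, LinearIsometryEquiv.symm_apply_apply,
          LinearIsometryEquiv.symm_apply_apply]
        show S (S.symm (x.snd 0)) = x.snd 0
        exact S.apply_symm_apply _
      · rw [hV1succ (V2 x) (n + 1), hV2succ x n, hV2succ x (n + 1), hV2succ (V1 x) (n + 1),
          hV1succ x n, hV1succ x (n + 1), LinearIsometryEquiv.symm_apply_apply,
          LinearIsometryEquiv.symm_apply_apply]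
        show S (S.symm (x.snd (n + 1))) = x.snd (n + 1)
        exact S.apply_symm_apply _
  · -- dilation property
    have h1pow : ∀ (n : ℕ) x, ((V1 ^ n) x).fst = (T1 ^ n) x.fst := by
      intro n
      induction n with
      | zero => intro x; simp
      | succ n ih =>
        intro x
        rw [pow_succ, ContinuousLinearMap.mul_apply, ih, hV1fst,
          pow_succ, ContinuousLinearMap.mul_apply]
    have h2pow : ∀ (n : ℕ) x, ((V2 ^ n) x).fst = (T2 ^ n) x.fst := by
      intro n
      induction n with
      | zero => intro x; simp
      | succ n ih =>
        intro x
        rw [pow_succ, ContinuousLinearMap.mul_apply, ih, hV2fst,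
          pow_succ, ContinuousLinearMap.mul_apply]
    intro n1 n2 h
    rw [ContinuousLinearMap.mul_apply, h1pow, h2pow, ContinuousLinearMap.mul_apply]; rfl
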